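/- Let $\mathfrak{g}$ be a $2n$-dimensional unimodular Lie algebra with Hermitian structure $(J,g)$. Then the fundamental form $F$ is balanced ($d^*F=0$) if and only if $\sum_{i=1}^{2n}[Je_i,e_i]=0$ for some (equivalently, any) orthonormal basis $\{e_1,\ldots,e_{2n}\}$ of $\mathfrak{g}$. -/

import Mathlib

/-- On a `2n`-dimensional *unimodular* Lie algebra with Hermitian structure `(J, g)`,
the fundamental form `F` is balanced (`d*F = 0`) if and only if
`∑ᵢ ⁅J eᵢ, eᵢ⁆ = 0` for an orthonormal basis `e₁, …, e_{2n}`. -/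
theorem balanced_iff_sum_brackets_zero {L : Type*} [LieRing L] [LieAlgebra ℝ L]
    [Module.Finite ℝ L] (n : ℕ)
    (hunimod : ∀ X : L, LinearMap.trace ℝ L (LieAlgebra.ad ℝ L X) = 0)
    (g : L →ₗ[ℝ] L →ₗ[ℝ] ℝ) (hsymm : ∀ x y, g x y = g y x)
    (J : L →ₗ[ℝ] L) (hJ2 : ∀ x, J (J x) = -x)
    (hN : ∀ x y : L, ⁅J x, J y⁆ - J ⁅J x, y⁆ - J ⁅x, J y⁆ - ⁅x, y⁆ = 0)
    (hcomp : ∀ x y, g (J x) (J y) = g x y)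
    (e : Module.Basis (Fin (2 * n)) ℝ L)
    (honb : ∀ i j, g (e i) (e j) = if i = j then (1 : ℝ) else 0)
    (nab : L → L → L)
    (hKoszul : ∀ X Y Z : L,
      2 * g (nab X Y) Z = g ⁅X, Y⁆ Z - g ⁅Y, Z⁆ X + g ⁅Z, X⁆ Y)
    (F : L → L → ℝ) (hF : ∀ X Y, F X Y = g X (J Y)) :
    (∀ X : L, -∑ i, (-F (nab (e i) (e i)) X - F (e i) (nab (e i) X)) = 0) ↔
      ∑ i, ⁅J (e i), e i⁆ = 0 := by
  have hrepr : ∀ (v : L) (j : Fin (2*n)), e.repr v j = g v (e j) := by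
    intro v j
    conv_rhs => rw [← e.sum_repr v]
    simp [map_sum, honb, -Module.Basis.sum_repr]
  have htr : ∀ A : L →ₗ[ℝ] L, LinearMap.trace ℝ L A = ∑ i, g (A (e i)) (e i) := by
    intro A
    rw [LinearMap.trace_eq_matrix_trace ℝ e A, Matrix.trace]
    simp [Matrix.diag, LinearMap.toMatrix_apply, hrepr]
  have hJg : ∀ x y : L, g x (J y) = - g (J x) y := by
    intro x y
    have h := hcomp (J x) y
    rw [hJ2 x] at h
    simp only [map_neg, LinearMap.neg_apply] at h
    linarith
  have key : ∀ X : L,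
      2 * (∑ i, (-F (nab (e i) (e i)) X - F (e i) (nab (e i) X)))
        = g (∑ i, ⁅J (e i), e i⁆) X := by
    intro X
    have hterm : ∀ i, 2 * (-F (nab (e i) (e i)) X - F (e i) (nab (e i) X)) =
        -(2 * g ⁅J X, e i⁆ (e i)) + (g (J ⁅X, e i⁆) (e i) - g ⁅X, J (e i)⁆ (e i))
          + g ⁅J (e i), e i⁆ X := by
      intro i
      have hK1 := hKoszul (e i) (e i) (J X)
      have hK2 := hKoszul (e i) X (J (e i))
      have h1 : g ⁅e i, e i⁆ (J X) = 0 := by rw [lie_self]; simp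
      have h2 : g ⁅e i, J X⁆ (e i) = - g ⁅J X, e i⁆ (e i) := by
        rw [← lie_skew (e i) (J X), map_neg]; simp
      have h3 : g ⁅e i, X⁆ (J (e i)) = g (J ⁅X, e i⁆) (e i) := by
        rw [← lie_skew (e i) X, map_neg]
        simp only [LinearMap.neg_apply, hJg, neg_neg]
      have hFa : F (nab (e i) (e i)) X = g (nab (e i) (e i)) (J X) := hF _ _
      have hFb : F (e i) (nab (e i) X) = - g (nab (e i) X) (J (e i)) := by
        rw [hF, hJg, hsymm (J (e i))]
      rw [hFa, hFb]
      linarith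
    calc 2 * (∑ i, (-F (nab (e i) (e i)) X - F (e i) (nab (e i) X)))
        = ∑ i, 2 * (-F (nab (e i) (e i)) X - F (e i) (nab (e i) X)) := by
          rw [Finset.mul_sum]
      _ = ∑ i, (-(2 * g ⁅J X, e i⁆ (e i))
            + (g (J ⁅X, e i⁆) (e i) - g ⁅X, J (e i)⁆ (e i)) + g ⁅J (e i), e i⁆ X) := by
          simp only [hterm]
      _ = -(2 * ∑ i, g ⁅J X, e i⁆ (e i))
            + ((∑ i, g (J ⁅X, e i⁆) (e i)) - ∑ i, g ⁅X, J (e i)⁆ (e i))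
            + ∑ i, g ⁅J (e i), e i⁆ X := by
          rw [Finset.sum_add_distrib, Finset.sum_add_distrib, Finset.sum_sub_distrib]
          simp [Finset.mul_sum]
      _ = g (∑ i, ⁅J (e i), e i⁆) X := by
          have hA : ∑ i, g ⁅J X, e i⁆ (e i) = 0 := by
            have h := htr (LieAlgebra.ad ℝ L (J X))
            rw [hunimod] at h
            simpa [LieAlgebra.ad_apply] using h.symm
          have hB : ∑ i, g (J ⁅X, e i⁆) (e i) = ∑ i, g ⁅X, J (e i)⁆ (e i) := by
            have h1 := htr (J ∘ₗ LieAlgebra.ad ℝ L X)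
            have h2 := htr (LieAlgebra.ad ℝ L X ∘ₗ J)
            have h3 : LinearMap.trace ℝ L (J ∘ₗ LieAlgebra.ad ℝ L X)
                = LinearMap.trace ℝ L (LieAlgebra.ad ℝ L X ∘ₗ J) := by
              rw [← Module.End.mul_eq_comp, ← Module.End.mul_eq_comp,
                LinearMap.trace_mul_comm]
            simp only [LinearMap.comp_apply, LieAlgebra.ad_apply] at h1 h2
            rw [← h1, ← h2, h3]
          have hD : ∑ i, g ⁅J (e i), e i⁆ X = g (∑ i, ⁅J (e i), e i⁆) X := by
            rw [map_sum, LinearMap.sum_apply]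
          rw [hA, hB, hD]
          ring
  constructor
  · intro h
    refine e.ext_elem fun j => ?_
    rw [hrepr, map_zero]
    have hk := key (e j)
    have h0 := h (e j)
    simp only [Finsupp.coe_zero, Pi.zero_apply]
    linarith
  · intro h X
    have hk := key X
    rw [h, map_zero, LinearMap.zero_apply] at hk
    linarith
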